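/- In the Sinkhorn-type scaling algorithm for a positive map T : M_k → M_m with T(Id), T*(Id) positive definite, for every n > 0 one has Y_n T(X_n (Id/√k) X_n*) Y_n* = Id/√m and X_{n+1}* T*(Y_n* (Id/√m) Y_n) X_{n+1} = Id/√k; moreover tr(A_n) = √k and tr(B_n) = √m for every n > 0, and the sequence det(X_n ⊗ Y_n) is positive and non-decreasing in n. -/

import Mathlib

open Matrix BigOperators
open scoped ComplexOrder

/-- A (possibly rectangular, as long as the index types have the same cardinality)
matrix has support if some generalized permutation diagonal has nonzero product. -/
def HasSupport {R C α : Type*} [Fintype R] [Fintype C] [CommMonoidWithZero α]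
    (A : Matrix R C α) : Prop :=
  ∃ σ : R ≃ C, ∏ i, A i (σ i) ≠ 0

/-- Total support: every nonzero entry lies on a nonzero generalized permutation diagonal. -/
def HasTotalSupport {R C α : Type*} [Fintype R] [Fintype C] [CommMonoidWithZero α]
    (A : Matrix R C α) : Prop :=
  ∀ p q, A p q ≠ 0 → ∃ σ : R ≃ C, σ p = q ∧ ∏ i, A i (σ i) ≠ 0

/-- The Kronecker product `A ⊗ 1_{m×k}` of `A ∈ M_{k×m}` with the all-ones matrix `1_{m×k}`. -/
def kronOnes {R C α : Type*} (A : Matrix R C α) : Matrix (R × C) (C × R) α :=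
  Matrix.of fun p q => A p.1 q.1

/-- A rectangular matrix has support if `A ⊗ 1_{m×k}` has support. -/
def RectSupport {R C α : Type*} [Fintype R] [Fintype C] [CommMonoidWithZero α]
    (A : Matrix R C α) : Prop :=
  HasSupport (kronOnes A)

/-- A rectangular matrix has total support if `A ⊗ 1_{m×k}` has total support. -/
def RectTotalSupport {R C α : Type*} [Fintype R] [Fintype C] [CommMonoidWithZero α]
    (A : Matrix R C α) : Prop :=
  HasTotalSupport (kronOnes A)

/-- A positive map `T : M_k → M_m` has support if for all orthonormal bases
`{v_i}` of `ℂ^k` and `{w_j}` of `ℂ^m`, the matrix `(tr(T(v_i v_i*) w_j w_j*))` has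
support as a rectangular matrix. -/
def MapSupport {k m : ℕ}
    (T : Matrix (Fin k) (Fin k) ℂ → Matrix (Fin m) (Fin m) ℂ) : Prop :=
  ∀ (v : Fin k → Fin k → ℂ) (w : Fin m → Fin m → ℂ),
    (∀ i j, star (v i) ⬝ᵥ v j = if i = j then 1 else 0) →
    (∀ i j, star (w i) ⬝ᵥ w j = if i = j then 1 else 0) →
    RectSupport (Matrix.of fun i j =>
      ((T (Matrix.vecMulVec (v i) (star (v i)))) *
        Matrix.vecMulVec (w j) (star (w j))).trace)

/-- A positive map `T : M_k → M_m` has total support if for all orthonormal bases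
the matrix `(tr(T(v_i v_i*) w_j w_j*))` has total support. -/
def MapTotalSupport {k m : ℕ}
    (T : Matrix (Fin k) (Fin k) ℂ → Matrix (Fin m) (Fin m) ℂ) : Prop :=
  ∀ (v : Fin k → Fin k → ℂ) (w : Fin m → Fin m → ℂ),
    (∀ i j, star (v i) ⬝ᵥ v j = if i = j then 1 else 0) →
    (∀ i j, star (w i) ⬝ᵥ w j = if i = j then 1 else 0) →
    RectTotalSupport (Matrix.of fun i j =>
      ((T (Matrix.vecMulVec (v i) (star (v i)))) *
        Matrix.vecMulVec (w j) (star (w j))).trace)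

/-- `T` is doubly stochastic: `T(Id/√k) = Id/√m` and `T*(Id/√m) = Id/√k` (the latter
expressed through the trace inner product). -/
def IsDoublyStochasticMap {k m : ℕ}
    (T : Matrix (Fin k) (Fin k) ℂ → Matrix (Fin m) (Fin m) ℂ) : Prop :=
  T ((Real.sqrt k : ℂ)⁻¹ • 1) = (Real.sqrt m : ℂ)⁻¹ • 1 ∧
  ∀ X, (Real.sqrt m : ℂ)⁻¹ * (T X).trace = (Real.sqrt k : ℂ)⁻¹ * X.trace

/-- `S` is the inverse square root `P^{-1/2}` of a positive definite matrix `P`: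
`S` is positive definite and `S · S = P⁻¹`. -/
def IsInvSqrt {n : ℕ} (P S : Matrix (Fin n) (Fin n) ℂ) : Prop :=
  S.PosDef ∧ S * S = P⁻¹


section ScalingHelpers
open Matrix
variable {n : ℕ}

private lemma posDef_mul_self' {S : Matrix (Fin n) (Fin n) ℂ} (hS : S.PosDef) : (S * S).PosDef := by
  refine Matrix.PosDef.of_dotProduct_mulVec_pos ?_ fun x hx => ?_
  · show (S * S)ᴴ = S * S
    rw [conjTranspose_mul, hS.isHermitian.eq]
  · have hy : S *ᵥ x ≠ 0 := fun h => hx <| (mulVec_injective_iff_isUnit.mpr hS.isUnit)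
      (by simpa using h)
    have h2 : star x ⬝ᵥ (S * S) *ᵥ x = star (S *ᵥ x) ⬝ᵥ (S *ᵥ x) := by
      rw [star_mulVec, hS.isHermitian.eq, ← mulVec_mulVec, dotProduct_mulVec]
    rw [h2]
    exact dotProduct_star_self_pos_iff.mpr hy

private lemma IsInvSqrt.isUnit_detP {P S : Matrix (Fin n) (Fin n) ℂ} (h : IsInvSqrt P S) :
    IsUnit P.det := by
  rcases h with ⟨hS, hSS⟩
  rw [isUnit_iff_ne_zero]
  intro hP
  have h0 : P⁻¹.det = 0 := by
    rw [Matrix.det_nonsing_inv, hP, Ring.inverse_zero]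
  rw [← hSS, Matrix.det_mul] at h0
  exact mul_ne_zero hS.det_pos.ne' hS.det_pos.ne' h0

private lemma IsInvSqrt.posDefP {P S : Matrix (Fin n) (Fin n) ℂ} (h : IsInvSqrt P S) :
    P.PosDef := by
  have h1 : P⁻¹.PosDef := h.2 ▸ posDef_mul_self' h.1
  exact Matrix.posDef_inv_iff.mp h1

private lemma IsInvSqrt.SPS {P S : Matrix (Fin n) (Fin n) ℂ} (h : IsInvSqrt P S) :
    S * P * S = 1 := by
  have h2 : S * (S * P) = 1 := by
    rw [← Matrix.mul_assoc, h.2, Matrix.nonsing_inv_mul _ h.isUnit_detP]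
  have h3 : S⁻¹ = S * P := Matrix.inv_eq_right_inv h2
  rw [Matrix.mul_assoc, ← Matrix.mul_assoc S P S, ← h3,
    Matrix.nonsing_inv_mul _ h.1.det_pos.ne'.isUnit]

private lemma IsInvSqrt.detSSP {P S : Matrix (Fin n) (Fin n) ℂ} (h : IsInvSqrt P S) :
    S.det * S.det * P.det = 1 := by
  have h2 : S * S * P = 1 := by rw [h.2, Matrix.nonsing_inv_mul _ h.isUnit_detP]
  rw [← Matrix.det_mul, ← Matrix.det_mul, h2, Matrix.det_one]

private lemma posDef_det_real {M : Matrix (Fin n) (Fin n) ℂ} (h : M.PosDef) :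
    ∃ d : ℝ, 0 < d ∧ M.det = (d : ℂ) := by
  have h2 := h.det_pos
  rw [Complex.lt_def] at h2
  refine ⟨M.det.re, by simpa using h2.1, ?_⟩
  apply Complex.ext <;> simp [← h2.2]

private lemma trace_eq_sum_eigenvalues' {A : Matrix (Fin n) (Fin n) ℂ} (hA : A.IsHermitian) :
    A.trace = ∑ i, (hA.eigenvalues i : ℂ) := by
  exact hA.trace_eq_sum_eigenvalues

private lemma prod_le_sum_div_pow' (z : Fin n → ℝ) (hz : ∀ i, 0 ≤ z i) :
    ∏ i, z i ≤ ((∑ i, z i) / n) ^ n := by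
  rcases Nat.eq_zero_or_pos n with h | h
  · subst h; simp
  have hn : (n : ℝ) ≠ 0 := Nat.cast_ne_zero.mpr h.ne'
  have key := Real.geom_mean_le_arith_mean_weighted Finset.univ (fun _ => (n:ℝ)⁻¹) z
    (fun i _ => by positivity) (by simp; field_simp) (fun i _ => hz i)
  have h1 : ∀ i, (z i ^ ((n:ℝ)⁻¹ : ℝ)) ^ n = z i := by
    intro i
    rw [← Real.rpow_natCast (z i ^ ((n:ℝ)⁻¹ : ℝ)) n, ← Real.rpow_mul (hz i),
      inv_mul_cancel₀ hn, Real.rpow_one]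
  calc ∏ i, z i = (∏ i, z i ^ ((n:ℝ)⁻¹ : ℝ)) ^ n := by
        rw [← Finset.prod_pow]
        exact (Finset.prod_congr rfl fun i _ => (h1 i)).symm
    _ ≤ (∑ i, (n:ℝ)⁻¹ * z i) ^ n :=
        pow_le_pow_left₀ (Finset.prod_nonneg fun i _ => Real.rpow_nonneg (hz i) _) key n
    _ = ((∑ i, z i) / n) ^ n := by rw [← Finset.mul_sum]; ring_nf

private lemma det_bound' (hn : 0 < n) {Q : Matrix (Fin n) (Fin n) ℂ} (hQ : Q.PosDef)
    (ht : Q.trace = ((Real.sqrt n : ℝ) : ℂ)) :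
    ∃ d : ℝ, 0 < d ∧ Q.det = (d : ℂ) ∧ d ≤ ((Real.sqrt n)⁻¹) ^ n := by
  have hev := hQ.eigenvalues_pos
  refine ⟨∏ i, hQ.1.eigenvalues i, Finset.prod_pos (fun i _ => hev i), ?_, ?_⟩
  · rw [hQ.1.det_eq_prod_eigenvalues]; push_cast; rfl
  · have htr : ∑ i, hQ.1.eigenvalues i = Real.sqrt n := by
      have h5 := (trace_eq_sum_eigenvalues' hQ.1).symm.trans ht
      exact_mod_cast (by push_cast at h5 ⊢; exact_mod_cast h5 :
        ((∑ i, hQ.1.eigenvalues i : ℝ) : ℂ) = ((Real.sqrt n : ℝ) : ℂ))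
    have hle := prod_le_sum_div_pow' (fun i => hQ.1.eigenvalues i) (fun i => (hev i).le)
    rw [htr] at hle
    have h2 : Real.sqrt n * Real.sqrt n = (n:ℝ) := Real.mul_self_sqrt (Nat.cast_nonneg n)
    have h3 : (0:ℝ) < Real.sqrt n := Real.sqrt_pos.mpr (by exact_mod_cast hn)
    have hs : Real.sqrt (n:ℕ) / (n:ℝ) = (Real.sqrt (n:ℕ))⁻¹ := by
      rw [div_eq_iff (by positivity : (n:ℝ) ≠ 0), inv_mul_eq_div, eq_div_iff h3.ne']
      linarith [h2]
    rw [hs] at hle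
    exact hle

private lemma cong_extract {Z C E : Matrix (Fin n) (Fin n) ℂ} (hZ : IsUnit Z.det)
    (h : Zᴴ * C * Z = E) : C = (Zᴴ)⁻¹ * E * Z⁻¹ := by
  have hZH : IsUnit (Zᴴ).det := by rw [Matrix.det_conjTranspose]; exact hZ.star
  calc C = (Zᴴ)⁻¹ * Zᴴ * C * (Z * Z⁻¹) := by
        rw [Matrix.nonsing_inv_mul _ hZH, Matrix.mul_nonsing_inv _ hZ, one_mul,
          Matrix.mul_one]
    _ = (Zᴴ)⁻¹ * (Zᴴ * C * Z) * Z⁻¹ := by simp only [Matrix.mul_assoc]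
    _ = (Zᴴ)⁻¹ * E * Z⁻¹ := by rw [h]

private lemma cong_extract' {Z C E : Matrix (Fin n) (Fin n) ℂ} (hZ : IsUnit Z.det)
    (h : Z * C * Zᴴ = E) : C = Z⁻¹ * E * (Zᴴ)⁻¹ := by
  have hZH : IsUnit (Zᴴ).det := by rw [Matrix.det_conjTranspose]; exact hZ.star
  calc C = Z⁻¹ * Z * C * (Zᴴ * (Zᴴ)⁻¹) := by
        rw [Matrix.nonsing_inv_mul _ hZ, Matrix.mul_nonsing_inv _ hZH, one_mul,
          Matrix.mul_one]
    _ = Z⁻¹ * (Z * C * Zᴴ) * (Zᴴ)⁻¹ := by simp only [Matrix.mul_assoc]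
    _ = Z⁻¹ * E * (Zᴴ)⁻¹ := by rw [h]

private lemma herm_inv_pair {Z : Matrix (Fin n) (Fin n) ℂ} :
    ((Zᴴ)⁻¹ * Z⁻¹)ᴴ = (Zᴴ)⁻¹ * Z⁻¹ := by
  rw [conjTranspose_mul, Matrix.conjTranspose_nonsing_inv, Matrix.conjTranspose_nonsing_inv,
    conjTranspose_conjTranspose]

end ScalingHelpers

open Kronecker
set_option maxHeartbeats 2000000

/-- Basic properties of the scaling algorithm: normalization identities for `n > 0`,
traces of `A_n`, `B_n`, and positivity/monotonicity of `det(X_n ⊗ Y_n)`. -/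
theorem scaling_properties {k m : ℕ}
    (T : Matrix (Fin k) (Fin k) ℂ →ₗ[ℂ] Matrix (Fin m) (Fin m) ℂ)
    (Tstar : Matrix (Fin m) (Fin m) ℂ →ₗ[ℂ] Matrix (Fin k) (Fin k) ℂ)
    (hadj : ∀ X Y, ((T X) * Yᴴ).trace = (X * (Tstar Y)ᴴ).trace)
    (hTpos : ∀ A : Matrix (Fin k) (Fin k) ℂ, A.PosSemidef → (T A).PosSemidef)
    (hT1 : (T 1).PosDef) (hTs1 : (Tstar 1).PosDef)
    (X : ℕ → Matrix (Fin k) (Fin k) ℂ) (Y : ℕ → Matrix (Fin m) (Fin m) ℂ)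
    (A : ℕ → Matrix (Fin k) (Fin k) ℂ) (B : ℕ → Matrix (Fin m) (Fin m) ℂ)
    (SA : ℕ → Matrix (Fin k) (Fin k) ℂ) (SB : ℕ → Matrix (Fin m) (Fin m) ℂ)
    (S0 : Matrix (Fin m) (Fin m) ℂ)
    (hX0 : X 0 = 1)
    (hS0 : IsInvSqrt (T ((Real.sqrt k : ℂ)⁻¹ • 1)) S0)
    (hY0 : Y 0 = (Real.sqrt (Real.sqrt m) : ℂ)⁻¹ • S0)
    (hA : ∀ n, A n = (X n)ᴴ * Tstar ((Real.sqrt m : ℂ)⁻¹ • ((Y n)ᴴ * Y n)) * X n)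
    (hSA : ∀ n, IsInvSqrt (A n) (SA n))
    (hXs : ∀ n, X (n + 1) = (Real.sqrt (Real.sqrt k) : ℂ)⁻¹ • (X n * SA n))
    (hB : ∀ n, B n = Y n * T ((Real.sqrt k : ℂ)⁻¹ • (X (n + 1) * (X (n + 1))ᴴ)) * (Y n)ᴴ)
    (hSB : ∀ n, IsInvSqrt (B n) (SB n))
    (hYs : ∀ n, Y (n + 1) = (Real.sqrt (Real.sqrt m) : ℂ)⁻¹ • (SB n * Y n))
    : (∀ n, 0 < n →
        Y n * T ((Real.sqrt k : ℂ)⁻¹ • (X n * (X n)ᴴ)) * (Y n)ᴴ =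
          (Real.sqrt m : ℂ)⁻¹ • 1 ∧
        (X (n + 1))ᴴ * Tstar ((Real.sqrt m : ℂ)⁻¹ • ((Y n)ᴴ * Y n)) * X (n + 1) =
          (Real.sqrt k : ℂ)⁻¹ • 1 ∧
        (A n).trace = (Real.sqrt k : ℂ) ∧ (B n).trace = (Real.sqrt m : ℂ)) ∧
      (∀ n, ((X n ⊗ₖ Y n).det).im = 0 ∧ 0 < ((X n ⊗ₖ Y n).det).re ∧
        ((X n ⊗ₖ Y n).det).re ≤ ((X (n + 1) ⊗ₖ Y (n + 1)).det).re) := by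
    -- degenerate case k = 0 (then m = 0 too)
  rcases Nat.eq_zero_or_pos k with hk0 | hk
  · have hm0 : m = 0 := by
      by_contra hm
      have h1 : (1 : Matrix (Fin k) (Fin k) ℂ) = 0 := by
        subst hk0; exact Subsingleton.elim _ _
      rw [h1, map_zero] at hT1
      have hx : (Finsupp.single (⟨0, Nat.pos_of_ne_zero hm⟩ : Fin m) (1:ℂ)) ≠ 0 := by
        simp
      have := hT1.2 hx
      simpa using this
    constructor
    · intro n hn
      subst hk0; subst hm0
      refine ⟨Subsingleton.elim _ _, Subsingleton.elim _ _, ?_, ?_⟩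
      · simp [Matrix.trace]
      · simp [Matrix.trace]
    · intro n
      subst hk0; subst hm0
      have hd : ∀ j, ((X j ⊗ₖ Y j)).det = 1 := fun j => Matrix.det_isEmpty
      simp [hd]
  have hm : 0 < m := by
    by_contra hm'
    have hm0 : m = 0 := Nat.eq_zero_of_not_pos hm'
    have h1 : (1 : Matrix (Fin m) (Fin m) ℂ) = 0 := by
      subst hm0; exact Subsingleton.elim _ _
    rw [h1, map_zero] at hTs1
    have hx : (Finsupp.single (⟨0, hk⟩ : Fin k) (1:ℂ)) ≠ 0 := by
      simp
    have := hTs1.2 hx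
    simpa using this
  -- scalar facts
  have hk' : (0:ℝ) < k := by exact_mod_cast hk
  have hm' : (0:ℝ) < m := by exact_mod_cast hm
  have hskR : (0:ℝ) < Real.sqrt k := Real.sqrt_pos.mpr hk'
  have hsmR : (0:ℝ) < Real.sqrt m := Real.sqrt_pos.mpr hm'
  have hqkR : (0:ℝ) < Real.sqrt (Real.sqrt k) := Real.sqrt_pos.mpr hskR
  have hqmR : (0:ℝ) < Real.sqrt (Real.sqrt m) := Real.sqrt_pos.mpr hsmR
  have hsk : ((Real.sqrt k : ℝ) : ℂ) ≠ 0 := by exact_mod_cast hskR.ne'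
  have hsm : ((Real.sqrt m : ℝ) : ℂ) ≠ 0 := by exact_mod_cast hsmR.ne'
  have hqk2 : ((Real.sqrt (Real.sqrt k) : ℝ) : ℂ) * ((Real.sqrt (Real.sqrt k) : ℝ) : ℂ)
      = ((Real.sqrt k : ℝ) : ℂ) := by
    rw [← Complex.ofReal_mul, Real.mul_self_sqrt hskR.le]
  have hqm2 : ((Real.sqrt (Real.sqrt m) : ℝ) : ℂ) * ((Real.sqrt (Real.sqrt m) : ℝ) : ℂ)
      = ((Real.sqrt m : ℝ) : ℂ) := by
    rw [← Complex.ofReal_mul, Real.mul_self_sqrt hsmR.le]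
  have hsk2 : ((Real.sqrt k : ℝ) : ℂ) * ((Real.sqrt k : ℝ) : ℂ) = (k : ℂ) := by
    rw [← Complex.ofReal_mul, Real.mul_self_sqrt hk'.le]
    push_cast; ring
  have hsm2 : ((Real.sqrt m : ℝ) : ℂ) * ((Real.sqrt m : ℝ) : ℂ) = (m : ℂ) := by
    rw [← Complex.ofReal_mul, Real.mul_self_sqrt hm'.le]
    push_cast; ring
  have hstar : ∀ r : ℝ, star (((r:ℝ):ℂ)⁻¹) = ((r:ℝ):ℂ)⁻¹ := by
    intro r
    rw [star_inv₀]
    norm_num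
  -- determinants exist as positive reals
  have hSAd : ∀ n, ∃ a : ℝ, 0 < a ∧ (SA n).det = (a:ℂ) := fun n => posDef_det_real (hSA n).1
  have hSBd : ∀ n, ∃ b : ℝ, 0 < b ∧ (SB n).det = (b:ℂ) := fun n => posDef_det_real (hSB n).1
  have hdet : ∀ n, ∃ x y : ℝ, 0 < x ∧ 0 < y ∧ (X n).det = (x:ℂ) ∧ (Y n).det = (y:ℂ) := by
    intro n
    induction n with
    | zero =>
      obtain ⟨s, hs, hes⟩ := posDef_det_real hS0.1
      refine ⟨1, (Real.sqrt (Real.sqrt m))⁻¹ ^ m * s, one_pos, by positivity,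
        by simp [hX0], ?_⟩
      rw [hY0, Matrix.det_smul, hes, Fintype.card_fin]
      push_cast
      ring
    | succ n ih =>
      obtain ⟨x, y, hx, hy, hdx, hdy⟩ := ih
      obtain ⟨a, ha, hda⟩ := hSAd n
      obtain ⟨b, hb, hdb⟩ := hSBd n
      refine ⟨(Real.sqrt (Real.sqrt k))⁻¹ ^ k * (x * a),
        (Real.sqrt (Real.sqrt m))⁻¹ ^ m * (b * y), by positivity, by positivity, ?_, ?_⟩
      · rw [hXs n, Matrix.det_smul, Matrix.det_mul, hdx, hda, Fintype.card_fin]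
        push_cast; ring
      · rw [hYs n, Matrix.det_smul, Matrix.det_mul, hdb, hdy, Fintype.card_fin]
        push_cast; ring
  have hXu : ∀ n, IsUnit (X n).det := by
    intro n
    obtain ⟨x, y, hx, hy, hdx, hdy⟩ := hdet n
    rw [hdx]
    exact isUnit_iff_ne_zero.mpr (Complex.ofReal_ne_zero.mpr hx.ne')
  have hYu : ∀ n, IsUnit (Y n).det := by
    intro n
    obtain ⟨x, y, hx, hy, hdx, hdy⟩ := hdet n
    rw [hdy]
    exact isUnit_iff_ne_zero.mpr (Complex.ofReal_ne_zero.mpr hy.ne')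
  -- claim 2 : for all n
  have claim2 : ∀ n, (X (n + 1))ᴴ * Tstar ((Real.sqrt m : ℂ)⁻¹ • ((Y n)ᴴ * Y n)) * X (n + 1) =
      (Real.sqrt k : ℂ)⁻¹ • 1 := by
    intro n
    have key : SA n * A n * SA n = 1 := (hSA n).SPS
    rw [hA n] at key
    rw [hXs n, Matrix.conjTranspose_smul, Matrix.conjTranspose_mul, (hSA n).1.isHermitian.eq,
      Matrix.smul_mul, Matrix.smul_mul, Matrix.mul_smul, smul_smul]
    simp only [Matrix.mul_assoc] at key ⊢
    rw [key, show star (((Real.sqrt (Real.sqrt k) : ℝ) : ℂ))⁻¹ *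
        ((Real.sqrt (Real.sqrt k) : ℝ) : ℂ)⁻¹ = ((Real.sqrt k : ℝ) : ℂ)⁻¹ by
      rw [hstar, ← mul_inv, hqk2]]
  -- claim 1 : shifted
  have claim1 : ∀ n, Y (n + 1) * T ((Real.sqrt k : ℂ)⁻¹ • (X (n + 1) * (X (n + 1))ᴴ)) *
      (Y (n + 1))ᴴ = (Real.sqrt m : ℂ)⁻¹ • 1 := by
    intro n
    have key : SB n * B n * SB n = 1 := (hSB n).SPS
    rw [hB n] at key
    rw [hYs n, Matrix.conjTranspose_smul, Matrix.conjTranspose_mul, (hSB n).1.isHermitian.eq]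
    simp only [Matrix.smul_mul, Matrix.mul_smul, smul_smul, Matrix.mul_assoc] at key ⊢
    rw [key, show star (((Real.sqrt (Real.sqrt m) : ℝ) : ℂ))⁻¹ *
        ((Real.sqrt (Real.sqrt m) : ℝ) : ℂ)⁻¹ = ((Real.sqrt m : ℝ) : ℂ)⁻¹ by
      rw [hstar, ← mul_inv, hqm2]]
  -- value of Tstar on the normalized Y-gram matrices
  have hCval : ∀ n, Tstar ((Real.sqrt m : ℂ)⁻¹ • ((Y n)ᴴ * Y n)) =
      (Real.sqrt k : ℂ)⁻¹ • (((X (n+1))ᴴ)⁻¹ * (X (n+1))⁻¹) := by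
    intro n
    rw [cong_extract (hXu (n+1)) (claim2 n)]
    simp only [Matrix.mul_smul, Matrix.smul_mul, Matrix.mul_one]
  have hChe : ∀ n, (Tstar ((Real.sqrt m : ℂ)⁻¹ • ((Y n)ᴴ * Y n)))ᴴ =
      Tstar ((Real.sqrt m : ℂ)⁻¹ • ((Y n)ᴴ * Y n)) := by
    intro n
    rw [hCval n, Matrix.conjTranspose_smul, herm_inv_pair, hstar]
  have hMh : ∀ n, ((Real.sqrt m : ℂ)⁻¹ • ((Y n)ᴴ * Y n))ᴴ =
      (Real.sqrt m : ℂ)⁻¹ • ((Y n)ᴴ * Y n) := by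
    intro n
    rw [Matrix.conjTranspose_smul, Matrix.conjTranspose_mul, conjTranspose_conjTranspose,
      hstar]
  -- trace of B n for every n
  have trB : ∀ n, (B n).trace = (Real.sqrt m : ℂ) := by
    intro n
    have hZHu : IsUnit ((X (n+1))ᴴ).det := by
      rw [Matrix.det_conjTranspose]; exact (hXu (n+1)).star
    have h1 := hadj ((Real.sqrt k : ℂ)⁻¹ • (X (n+1) * (X (n+1))ᴴ))
      ((Real.sqrt m : ℂ)⁻¹ • ((Y n)ᴴ * Y n))
    rw [hMh n, hChe n, hCval n] at h1
    have hz : (X (n+1))ᴴ * (((X (n+1))ᴴ)⁻¹ * (X (n+1))⁻¹) = (X (n+1))⁻¹ := by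
      rw [← Matrix.mul_assoc, Matrix.mul_nonsing_inv _ hZHu, one_mul]
    have h2 : (B n).trace = (T ((Real.sqrt k : ℂ)⁻¹ • (X (n+1) * (X (n+1))ᴴ)) *
        ((Y n)ᴴ * Y n)).trace := by
      rw [hB n, Matrix.trace_mul_comm, ← Matrix.mul_assoc, Matrix.trace_mul_comm]
    -- compute the right side of h1
    have h3 : (((Real.sqrt k : ℂ)⁻¹ • (X (n+1) * (X (n+1))ᴴ)) *
        ((Real.sqrt k : ℂ)⁻¹ • (((X (n+1))ᴴ)⁻¹ * (X (n+1))⁻¹))).trace = 1 := by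
      simp only [Matrix.smul_mul, Matrix.mul_smul, smul_smul, Matrix.trace_smul]
      simp only [Matrix.mul_assoc, hz]
      rw [Matrix.mul_nonsing_inv _ (hXu (n+1)), Matrix.trace_one]
      rw [smul_eq_mul, show ((Fintype.card (Fin k) : ℂ)) = (k:ℂ) by simp]
      rw [← mul_inv, hsk2]
      exact inv_mul_cancel₀ (by exact_mod_cast hk'.ne')
    rw [h3] at h1
    -- left side of h1
    have h4 : (T ((Real.sqrt k : ℂ)⁻¹ • (X (n+1) * (X (n+1))ᴴ)) *
        ((Real.sqrt m : ℂ)⁻¹ • ((Y n)ᴴ * Y n))).trace =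
        (Real.sqrt m : ℂ)⁻¹ * (B n).trace := by
      rw [Matrix.mul_smul, Matrix.trace_smul, smul_eq_mul, h2]
    rw [h4] at h1
    field_simp at h1
    exact h1
  -- trace of A n for n ≥ 1
  have trA : ∀ n, (A (n+1)).trace = (Real.sqrt k : ℂ) := by
    intro n
    set j := n + 1 with hj
    have hYHu : IsUnit ((Y j)ᴴ).det := by
      rw [Matrix.det_conjTranspose]; exact (hYu j).star
    have h1 := hadj (X j * (X j)ᴴ) ((Real.sqrt m : ℂ)⁻¹ • ((Y j)ᴴ * Y j))
    rw [hMh j, hChe j] at h1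
    -- trace (A j) = RHS of h1
    have h2 : (A j).trace = ((X j * (X j)ᴴ) *
        Tstar ((Real.sqrt m : ℂ)⁻¹ • ((Y j)ᴴ * Y j))).trace := by
      rw [hA j, Matrix.trace_mul_comm, ← Matrix.mul_assoc]
    -- T of the X-gram matrix from claim1
    have hD : T ((Real.sqrt k : ℂ)⁻¹ • (X j * (X j)ᴴ)) =
        (Real.sqrt m : ℂ)⁻¹ • ((Y j)⁻¹ * ((Y j)ᴴ)⁻¹) := by
      rw [cong_extract' (hYu j) (claim1 n)]
      simp only [Matrix.mul_smul, Matrix.smul_mul, Matrix.mul_one]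
    have hTP : T (X j * (X j)ᴴ) = (Real.sqrt k : ℂ) •
        ((Real.sqrt m : ℂ)⁻¹ • ((Y j)⁻¹ * ((Y j)ᴴ)⁻¹)) := by
      rw [← hD, ← _root_.map_smul, smul_smul, mul_inv_cancel₀ hsk, one_smul]
    rw [hTP] at h1
    have h5 : ((Y j)⁻¹ * ((Y j)ᴴ)⁻¹ * ((Y j)ᴴ * Y j)) = 1 := by
      rw [Matrix.mul_assoc ((Y j)⁻¹), ← Matrix.mul_assoc (((Y j)ᴴ)⁻¹),
        Matrix.nonsing_inv_mul _ hYHu, one_mul, Matrix.nonsing_inv_mul _ (hYu j)]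
    have h6 : (((Real.sqrt k : ℂ) • ((Real.sqrt m : ℂ)⁻¹ • ((Y j)⁻¹ * ((Y j)ᴴ)⁻¹))) *
        ((Real.sqrt m : ℂ)⁻¹ • ((Y j)ᴴ * Y j))).trace = (Real.sqrt k : ℂ) := by
      simp only [Matrix.smul_mul, Matrix.mul_smul, smul_smul, Matrix.trace_smul]
      rw [h5, Matrix.trace_one, smul_eq_mul,
        show ((Fintype.card (Fin m) : ℂ)) = (m:ℂ) by simp]
      field_simp
      rw [mul_comm ((Real.sqrt m : ℂ)) ((Real.sqrt m : ℂ)) ] at hsm2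
      rw [sq, hsm2]
    rw [h6] at h1
    rw [h2, ← h1]
  -- trace of A 0
  have trA0 : (A 0).trace = (Real.sqrt k : ℂ) := by
    have hWS := hS0
    have hY0N : (Y 0)ᴴ * Y 0 = (Real.sqrt m : ℂ)⁻¹ • (S0 * S0) := by
      rw [hY0, Matrix.conjTranspose_smul, hS0.1.isHermitian.eq, Matrix.smul_mul,
        Matrix.mul_smul, smul_smul, hstar, ← mul_inv, hqm2]
    have hA0 : A 0 = Tstar ((Real.sqrt m : ℂ)⁻¹ • ((Real.sqrt m : ℂ)⁻¹ • (S0 * S0))) := by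
      rw [hA 0, hX0, conjTranspose_one, one_mul, Matrix.mul_one, hY0N]
    have hM0h : (((Real.sqrt m : ℂ)⁻¹ • ((Real.sqrt m : ℂ)⁻¹ • (S0 * S0))))ᴴ =
        ((Real.sqrt m : ℂ)⁻¹ • ((Real.sqrt m : ℂ)⁻¹ • (S0 * S0))) := by
      rw [Matrix.conjTranspose_smul, Matrix.conjTranspose_smul, Matrix.conjTranspose_mul,
        hS0.1.isHermitian.eq, hstar]
    have h1 := hadj 1 ((Real.sqrt m : ℂ)⁻¹ • ((Real.sqrt m : ℂ)⁻¹ • (S0 * S0)))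
    rw [hM0h, one_mul, Matrix.trace_conjTranspose] at h1
    have hT1W : T 1 = (Real.sqrt k : ℂ) • T ((Real.sqrt k : ℂ)⁻¹ • 1) := by
      rw [← _root_.map_smul, smul_smul, mul_inv_cancel₀ hsk, one_smul]
    have hWtr : (T ((Real.sqrt k : ℂ)⁻¹ • 1) * (S0 * S0)).trace = (m : ℂ) := by
      rw [Matrix.trace_mul_comm, Matrix.mul_assoc, Matrix.trace_mul_comm, hS0.SPS,
        Matrix.trace_one]
      simp
    rw [hT1W] at h1
    have h2 : (((Real.sqrt k : ℂ) • T ((Real.sqrt k : ℂ)⁻¹ • 1)) *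
        ((Real.sqrt m : ℂ)⁻¹ • ((Real.sqrt m : ℂ)⁻¹ • (S0 * S0)))).trace =
        (Real.sqrt k : ℂ) := by
      simp only [Matrix.smul_mul, Matrix.mul_smul, smul_smul, Matrix.trace_smul]
      rw [hWtr, smul_eq_mul]
      field_simp
      rw [mul_comm ((Real.sqrt m : ℂ)) ((Real.sqrt m : ℂ)) ] at hsm2
      rw [sq, hsm2]
    rw [h2] at h1
    rw [hA0, ← star_star ((Tstar _).trace), ← h1]
    simp [Complex.conj_ofReal]
  -- the step inequality for determinants
  have hqk4 : Real.sqrt (Real.sqrt k) * Real.sqrt (Real.sqrt k) = Real.sqrt k :=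
    Real.mul_self_sqrt hskR.le
  have hqm4 : Real.sqrt (Real.sqrt m) * Real.sqrt (Real.sqrt m) = Real.sqrt m :=
    Real.mul_self_sqrt hsmR.le
  have step : ∀ (n : ℕ) (x y : ℝ), 0 < x → 0 < y → (X n).det = (x:ℂ) → (Y n).det = (y:ℂ) →
      ∃ x' y', 0 < x' ∧ 0 < y' ∧ x ≤ x' ∧ y ≤ y' ∧
        (X (n+1)).det = (x':ℂ) ∧ (Y (n+1)).det = (y':ℂ) := by
    intro n x y hx hy hdx hdy
    obtain ⟨a, ha, hda⟩ := hSAd n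
    obtain ⟨b, hb, hdb⟩ := hSBd n
    have htA : (A n).trace = ((Real.sqrt k : ℝ) : ℂ) := by
      cases n with
      | zero => exact trA0
      | succ j => exact trA j
    have htB : (B n).trace = ((Real.sqrt m : ℝ) : ℂ) := trB n
    obtain ⟨α, hα, hdα, hαle⟩ := det_bound' hk (hSA n).posDefP htA
    obtain ⟨β, hβ, hdβ, hβle⟩ := det_bound' hm (hSB n).posDefP htB
    have hrelA : a * a * α = 1 := by
      have h7 := (hSA n).detSSP
      rw [hda, hdα] at h7
      exact_mod_cast h7
    have hrelB : b * b * β = 1 := by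
      have h7 := (hSB n).detSSP
      rw [hdb, hdβ] at h7
      exact_mod_cast h7
    have hka : Real.sqrt (Real.sqrt k) ^ k ≤ a := by
      set c := Real.sqrt (Real.sqrt k) ^ k with hc
      have hc0 : (0:ℝ) < c := pow_pos hqkR k
      have h8 : α ≤ (c * c)⁻¹ := by
        rw [hc, ← mul_pow, hqk4, ← inv_pow]
        exact hαle
      have h9 : α * (c * c) ≤ 1 := by
        calc α * (c * c) ≤ (c*c)⁻¹ * (c*c) :=
              mul_le_mul_of_nonneg_right h8 (by positivity)
          _ = 1 := inv_mul_cancel₀ (by positivity)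
      nlinarith [mul_pos hc0 ha, mul_pos ha ha, mul_pos hc0 hc0]
    have hmb : Real.sqrt (Real.sqrt m) ^ m ≤ b := by
      set c := Real.sqrt (Real.sqrt m) ^ m with hc
      have hc0 : (0:ℝ) < c := pow_pos hqmR m
      have h8 : β ≤ (c * c)⁻¹ := by
        rw [hc, ← mul_pow, hqm4, ← inv_pow]
        exact hβle
      have h9 : β * (c * c) ≤ 1 := by
        calc β * (c * c) ≤ (c*c)⁻¹ * (c*c) :=
              mul_le_mul_of_nonneg_right h8 (by positivity)
          _ = 1 := inv_mul_cancel₀ (by positivity)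
      nlinarith [mul_pos hc0 hb, mul_pos hb hb, mul_pos hc0 hc0]
    refine ⟨(Real.sqrt (Real.sqrt k))⁻¹ ^ k * (x * a),
      (Real.sqrt (Real.sqrt m))⁻¹ ^ m * (b * y), by positivity, by positivity, ?_, ?_, ?_, ?_⟩
    · have h10 : x = (Real.sqrt (Real.sqrt k))⁻¹ ^ k * (x * Real.sqrt (Real.sqrt k) ^ k) := by
        rw [inv_pow]
        field_simp
      calc x = (Real.sqrt (Real.sqrt k))⁻¹ ^ k * (x * Real.sqrt (Real.sqrt k) ^ k) := h10
        _ ≤ (Real.sqrt (Real.sqrt k))⁻¹ ^ k * (x * a) :=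
          mul_le_mul_of_nonneg_left (mul_le_mul_of_nonneg_left hka hx.le) (by positivity)
    · have h10 : y = (Real.sqrt (Real.sqrt m))⁻¹ ^ m * (Real.sqrt (Real.sqrt m) ^ m * y) := by
        rw [inv_pow]
        field_simp
      calc y = (Real.sqrt (Real.sqrt m))⁻¹ ^ m * (Real.sqrt (Real.sqrt m) ^ m * y) := h10
        _ ≤ (Real.sqrt (Real.sqrt m))⁻¹ ^ m * (b * y) :=
          mul_le_mul_of_nonneg_left (mul_le_mul_of_nonneg_right hmb hy.le) (by positivity)
    · rw [hXs n, Matrix.det_smul, Matrix.det_mul, hdx, hda, Fintype.card_fin]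
      push_cast; ring
    · rw [hYs n, Matrix.det_smul, Matrix.det_mul, hdb, hdy, Fintype.card_fin]
      push_cast; ring
  constructor
  · intro n hn
    obtain ⟨j, rfl⟩ : ∃ j, n = j + 1 := ⟨n - 1, by omega⟩
    exact ⟨claim1 j, claim2 (j+1), trA j, trB (j+1)⟩
  · intro n
    obtain ⟨x, y, hx, hy, hdx, hdy⟩ := hdet n
    obtain ⟨x', y', hx', hy', hxx, hyy, hdx', hdy'⟩ := step n x y hx hy hdx hdy
    have e1 : (X n ⊗ₖ Y n).det = ((x ^ m * y ^ k : ℝ) : ℂ) := by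
      rw [Matrix.det_kronecker, hdx, hdy, Fintype.card_fin, Fintype.card_fin]
      push_cast; ring
    have e2 : (X (n+1) ⊗ₖ Y (n+1)).det = ((x' ^ m * y' ^ k : ℝ) : ℂ) := by
      rw [Matrix.det_kronecker, hdx', hdy', Fintype.card_fin, Fintype.card_fin]
      push_cast; ring
    refine ⟨by rw [e1, Complex.ofReal_im], ?_, ?_⟩
    · rw [e1, Complex.ofReal_re]
      positivity
    rw [e1, e2, Complex.ofReal_re, Complex.ofReal_re]
    exact mul_le_mul (pow_le_pow_left₀ hx.le hxx m) (pow_le_pow_left₀ hy.le hyy k)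
      (by positivity) (by positivity)
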